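/- Let G be a countable discrete group, (X,d) a compact metric space with diameter H > 0, and let X^G carry the shift action and the metric 𝒅 as in the context; set l = Σ_{g in G} α_g. Let 0 < ε < 1/2 and let S be a finite nonempty subset of G with Σ_{g in G\S} α_g ≤ ε/(2H). Then for every finite nonempty subset F of G, the maximal cardinality of a (F, 3lε)-separated subset of (X^G, 𝒅) satisfies s_F(𝒅, 3lε, X^G) ≤ N(ε)^{|SF|}, where N(ε) is the maximal cardinality of an ε-separated subset of (X,d) and SF = { gh : g ∈ S, h ∈ F }. -/

import Mathlib

open Filter Set Topology
open scoped ENNReal Pointwise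

namespace MeanDim10

/-- The shift action of `G` on `X^G`: `(σ^h x)_g = x_{gh}`. -/
def shift {G X : Type*} [Group G] (h : G) (x : G → X) : G → X := fun g => x (g * h)

/-- The metric `𝒅((x_g),(y_g)) = Σ_g α_g d(x_g, y_g)` on `X^G`. -/
noncomputable def bigD {G X : Type*} [MetricSpace X] (α : G → ℝ) (x y : G → X) : ℝ :=
  ∑' g, α g * dist (x g) (y g)

/-- The dynamical (Bowen) metric `d_F(x,y) = max_{g ∈ F} d(gx, gy)`. -/
noncomputable def dynDist {G X : Type*} (T : G → X → X) (d : X → X → ℝ)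
    (F : Finset G) (x y : X) : ℝ :=
  if h : F.Nonempty then F.sup' h (fun g => d (T g x) (T g y)) else 0

/-- `K` is an `(F,ε)`-separated subset of `E`. -/
def IsSeparatedSet {G X : Type*} (T : G → X → X) (d : X → X → ℝ)
    (F : Finset G) (ε : ℝ) (E : Set X) (K : Finset X) : Prop :=
  ↑K ⊆ E ∧ ∀ x ∈ K, ∀ y ∈ K, x ≠ y → ε < dynDist T d F x y

/-- `s_F(d,ε,E)`: maximal cardinality of an `(F,ε)`-separated subset of `E`. -/
noncomputable def sepNum {G X : Type*} (T : G → X → X) (d : X → X → ℝ)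
    (F : Finset G) (ε : ℝ) (E : Set X) : ℕ :=
  sSup {n : ℕ | ∃ K : Finset X, IsSeparatedSet T d F ε E K ∧ K.card = n}

/-- `N(ε)`: maximal cardinality of an `ε`-separated subset of `X`. -/
noncomputable def maxSep (X : Type*) [MetricSpace X] (ε : ℝ) : ℕ :=
  sSup {n : ℕ | ∃ Q : Finset X, (∀ p ∈ Q, ∀ q ∈ Q, p ≠ q → ε < dist p q) ∧ Q.card = n}

/-- `s_F(𝒅, 3lε, X^G) ≤ N(ε)^{|SF|}`. -/
theorem sepNum_shift_le {G X : Type*} [Group G] [Countable G] [DecidableEq G]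
    [MetricSpace X] [CompactSpace X]
    (α : G → ℝ) (hαpos : ∀ g, 0 < α g) (hα1 : α (1 : G) = 1) (hsum : Summable α)
    (H : ℝ) (hH : H = Metric.diam (Set.univ : Set X)) (hHpos : 0 < H)
    (l : ℝ) (hl : l = ∑' g, α g)
    (ε : ℝ) (hε0 : 0 < ε) (hε1 : ε < 1 / 2)
    (S : Finset G) (hSne : S.Nonempty)
    (htail : (∑' g : {g : G // g ∉ S}, α g) ≤ ε / (2 * H))
    (F : Finset G) (hF : F.Nonempty) :
    sepNum shift (bigD α) F (3 * l * ε) (Set.univ : Set (G → X))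
      ≤ maxSep X ε ^ (S * F).card := by
  classical
  have hdist : ∀ a b : X, dist a b ≤ H := by
    intro a b
    rw [hH]
    exact Metric.dist_le_diam_of_mem isCompact_univ.isBounded (mem_univ a) (mem_univ b)
  have hl1 : (1:ℝ) ≤ l := by
    have := Summable.le_tsum hsum 1 (fun j _ => (hαpos j).le)
    rwa [hα1, ← hl] at this
  -- a finite (ε/2)-net
  obtain ⟨t, htf, ht⟩ := Metric.totallyBounded_iff.mp (isCompact_univ : IsCompact (univ : Set X)).totallyBounded (ε/2) (by linarith)
  have hcenter : ∀ q : X, ∃ c, c ∈ htf.toFinset ∧ dist q c < ε/2 := by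
    intro q
    have := ht (mem_univ q)
    simp only [Set.mem_iUnion, Metric.mem_ball] at this
    obtain ⟨c, hc1, hc2⟩ := this
    exact ⟨c, htf.mem_toFinset.mpr hc1, hc2⟩
  choose cf hcf1 hcf2 using hcenter
  have hM : ∀ Q : Finset X, (∀ p ∈ Q, ∀ q ∈ Q, p ≠ q → ε < dist p q) →
      Q.card ≤ htf.toFinset.card := by
    intro Q hQ
    apply Finset.card_le_card_of_injOn cf (fun q _ => hcf1 q)
    intro p hp q hq hpq
    by_contra hne
    have h1 := hQ p hp q hq hne
    have h2 : dist p q < ε := by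
      calc dist p q ≤ dist p (cf p) + dist (cf p) q := dist_triangle _ _ _
        _ < ε/2 + ε/2 :=
            add_lt_add (hcf2 p) (by rw [hpq, dist_comm]; exact hcf2 q)
        _ = ε := by ring
    linarith
  -- a maximal ε-separated set
  set Ssep : Set ℕ :=
    {n : ℕ | ∃ Q : Finset X, (∀ p ∈ Q, ∀ q ∈ Q, p ≠ q → ε < dist p q) ∧ Q.card = n} with hSsep
  have hbdd : BddAbove Ssep := ⟨htf.toFinset.card, by rintro n ⟨Q, hQ, rfl⟩; exact hM Q hQ⟩
  have hnemp : Ssep.Nonempty := ⟨0, ∅, by simp, by simp⟩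
  obtain ⟨Q, hQsep, hQcard⟩ := Nat.sSup_mem hnemp hbdd
  have hspan : ∀ p : X, ∃ q ∈ Q, dist p q ≤ ε := by
    intro p
    by_contra hno
    push_neg at hno
    have hpQ : p ∉ Q := by
      intro hp
      have := hno p hp
      simp at this
      linarith
    have hsep' : ∀ a ∈ insert p Q, ∀ b ∈ insert p Q, a ≠ b → ε < dist a b := by
      intro a ha b hb hab
      rcases Finset.mem_insert.mp ha with ha' | ha'
      · rcases Finset.mem_insert.mp hb with hb' | hb'
        · exact absurd (ha'.trans hb'.symm) hab
        · rw [ha']; exact hno b hb'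
      · rcases Finset.mem_insert.mp hb with hb' | hb'
        · rw [hb', dist_comm]; exact hno a ha'
        · exact hQsep a ha' b hb' hab
    have hmem : (insert p Q).card ∈ Ssep := ⟨insert p Q, hsep', rfl⟩
    have := le_csSup hbdd hmem
    rw [Finset.card_insert_of_notMem hpQ, hQcard] at this
    omega
  choose r hrQ hrd using hspan
  rw [sepNum]
  refine csSup_le' ?_
  rintro n ⟨K, ⟨-, hKsep⟩, rfl⟩
  -- points with the same code are equal
  have key : ∀ x y : G → X, x ∈ K → y ∈ K →
      (∀ g ∈ S * F, r (x g) = r (y g)) → x = y := by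
    intro x y hx hy hcode
    by_contra hxy
    have hsep := hKsep x hx y hy hxy
    have hclose : ∀ g ∈ S * F, dist (x g) (y g) ≤ 2 * ε := by
      intro g hg
      calc dist (x g) (y g) ≤ dist (x g) (r (x g)) + dist (r (x g)) (y g) := dist_triangle _ _ _
        _ ≤ ε + ε :=
            add_le_add (hrd _) (by rw [hcode g hg, dist_comm]; exact hrd _)
        _ = 2 * ε := by ring
    have hdyn : dynDist shift (bigD α) F x y ≤ 3 * l * ε := by
      rw [dynDist, dif_pos hF]
      apply Finset.sup'_le
      intro h hh
      rw [bigD]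
      have hfs : Summable (fun g => α g * dist (shift h x g) (shift h y g)) :=
        Summable.of_nonneg_of_le (fun g => mul_nonneg (hαpos g).le dist_nonneg)
          (fun g => mul_le_mul_of_nonneg_left (hdist _ _) (hαpos g).le) (hsum.mul_right H)
      rw [← Summable.sum_add_tsum_compl (s := S) hfs]
      have h1 : ∑ g ∈ S, α g * dist (shift h x g) (shift h y g) ≤ 2 * ε * l := by
        calc ∑ g ∈ S, α g * dist (shift h x g) (shift h y g)
            ≤ ∑ g ∈ S, α g * (2 * ε) := by
              apply Finset.sum_le_sum
              intro g hg
              exact mul_le_mul_of_nonneg_left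
                (hclose (g * h) (Finset.mul_mem_mul hg hh)) (hαpos g).le
          _ = (∑ g ∈ S, α g) * (2 * ε) := by rw [← Finset.sum_mul]
          _ ≤ l * (2 * ε) := by
              refine mul_le_mul_of_nonneg_right ?_ (by linarith)
              rw [hl]
              exact Summable.sum_le_tsum S (fun g _ => (hαpos g).le) hsum
          _ = 2 * ε * l := by ring
      have h2 : (∑' g : ↑((S : Set G))ᶜ, α ↑g * dist (shift h x ↑g) (shift h y ↑g)) ≤ ε / 2 := by
        have hb : (∑' g : ↑((S : Set G))ᶜ, α ↑g * dist (shift h x ↑g) (shift h y ↑g))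
            ≤ ∑' g : ↑((S : Set G))ᶜ, α ↑g * H := by
          refine Summable.tsum_le_tsum (fun g => mul_le_mul_of_nonneg_left (hdist _ _) (hαpos _).le)
            (hfs.subtype _) ((hsum.mul_right H).subtype _)
        have heq : (∑' g : ↑((S : Set G))ᶜ, α ↑g * H)
            = (∑' g : {g : G // g ∉ S}, α ↑g) * H := by
          rw [tsum_mul_right]
          congr 1
        have h3 : (∑' g : {g : G // g ∉ S}, α ↑g) * H ≤ (ε / (2 * H)) * H :=
          mul_le_mul_of_nonneg_right htail hHpos.le
        have h4 : (ε / (2 * H)) * H = ε / 2 := by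
          field_simp
        linarith [hb, heq ▸ (h3.trans_eq h4)]
      have h5 : ε / 2 ≤ l * ε := by nlinarith
      linarith
    linarith
  have hKcard : K.card ≤ Q.card ^ (S * F).card := by
    have hinj : Function.Injective
        (fun (x : ↥K) (g : ↥(S * F)) => (⟨r (x.1 g.1), hrQ _⟩ : ↥Q)) := by
      intro x y hxy
      apply Subtype.ext
      apply key x.1 y.1 x.2 y.2
      intro g hg
      exact congrArg Subtype.val (congrFun hxy ⟨g, hg⟩)
    calc K.card = Fintype.card ↥K := (Fintype.card_coe K).symm
      _ ≤ Fintype.card (↥(S * F) → ↥Q) := Fintype.card_le_of_injective _ hinj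
      _ = Fintype.card ↥Q ^ Fintype.card ↥(S * F) := Fintype.card_fun
      _ = Q.card ^ (S * F).card := by rw [Fintype.card_coe, Fintype.card_coe]
  have hms : maxSep X ε = Q.card := by
    rw [maxSep, ← hSsep, ← hQcard]
  rw [hms]
  exact hKcard

end MeanDim10
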